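/- Let F₀ ∈ F₂[[z]] be the power series whose coefficient at z^m is 1 if and only if ν₂(m+1) ≡ 0 (mod 4), and set H := F₀ + z·F₀². Then (1 + z)·(H + z³·H⁴) = 1 in F₂[[z]]; in particular the power series attached to the sequence s((aabb)^∞) is algebraic of degree 4, and not 8, over the relevant rational function field. -/

import Mathlib

open PowerSeries Finset

private lemma zmod2_mul_self (x : ZMod 2) : x * x = x := by revert x; decide

private lemma coeff_sq (S : PowerSeries (ZMod 2)) (n : ℕ) :
    PowerSeries.coeff n (S ^ 2) =
      if 2 ∣ n then PowerSeries.coeff (n / 2) S else 0 := by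
  rw [sq, PowerSeries.coeff_mul]
  by_cases h : 2 ∣ n
  · obtain ⟨k, rfl⟩ := h
    have hk : (k, k) ∈ antidiagonal (2 * k) := by
      simp [Finset.mem_antidiagonal]; ring
    rw [if_pos ⟨k, rfl⟩, ← Finset.add_sum_erase _ _ hk]
    have h0 : ∑ p ∈ (antidiagonal (2 * k)).erase (k, k),
        PowerSeries.coeff p.1 S * PowerSeries.coeff p.2 S = 0 := by
      apply Finset.sum_involution (fun p _ => (p.2, p.1))
      · intro a _; dsimp only
        rw [mul_comm ((PowerSeries.coeff a.2) S)]
        exact CharTwo.add_self_eq_zero _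
      · intro a ha _
        simp only [Finset.mem_erase, Finset.HasAntidiagonal.mem_antidiagonal] at ha
        intro hc
        apply ha.1
        have h1 : a.2 = a.1 := congrArg Prod.fst hc
        have : a.1 + a.2 = 2 * k := ha.2
        have : a.1 = k := by omega
        exact Prod.ext this (by omega)
      · intro a ha
        simp only [Finset.mem_erase, Finset.HasAntidiagonal.mem_antidiagonal] at ha ⊢
        constructor
        · intro hc
          apply ha.1
          have h1 : a.2 = k := congrArg Prod.fst hc
          have h2 : a.1 = k := congrArg Prod.snd hc
          exact Prod.ext h2 h1
        · omega
      · intro a _; rfl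
    rw [h0, add_zero, zmod2_mul_self]
    have h2 : 2 * k / 2 = k := by omega
    rw [h2]
  · rw [if_neg h]
    apply Finset.sum_involution (fun p _ => (p.2, p.1))
    · intro a _; dsimp only
      rw [mul_comm ((PowerSeries.coeff a.2) S)]
      exact CharTwo.add_self_eq_zero _
    · intro a ha _
      simp only [Finset.HasAntidiagonal.mem_antidiagonal] at ha
      intro hc
      have h1 : a.2 = a.1 := congrArg Prod.fst hc
      exact h ⟨a.1, by omega⟩
    · intro a ha
      simp only [Finset.HasAntidiagonal.mem_antidiagonal] at ha ⊢; omega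
    · intro a _; rfl

private lemma val_even {n : ℕ} (h : n % 2 = 0) : padicValNat 2 (n + 1) = 0 :=
  padicValNat.eq_zero_of_not_dvd (by omega)

private lemma val_odd {n : ℕ} (h : n % 2 = 1) :
    padicValNat 2 (n + 1) = padicValNat 2 ((n - 1) / 2 + 1) + 1 := by
  obtain ⟨k, rfl⟩ : ∃ k, n = 2 * k + 1 := ⟨n / 2, by omega⟩
  have h2 : 2 * k + 1 + 1 = 2 * (k + 1) := by ring
  have h3 : (2 * k + 1 - 1) / 2 = k := by omega
  rw [h2, h3, padicValNat.mul (by norm_num) (by omega), padicValNat.self (by norm_num)]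
  omega

private lemma coeffH (F₀ H : PowerSeries (ZMod 2))
    (hF₀ : F₀ = PowerSeries.mk fun m =>
      if padicValNat 2 (m + 1) % 4 = 0 then 1 else 0)
    (hH : H = F₀ + PowerSeries.X * F₀ ^ 2) (n : ℕ) :
    PowerSeries.coeff n H =
      if padicValNat 2 (n + 1) % 4 < 2 then 1 else 0 := by
  subst hF₀ hH
  rw [map_add]
  rcases Nat.even_or_odd n with he | ho
  · have h0 : n % 2 = 0 := Nat.even_iff.mp he
    have hv : padicValNat 2 (n + 1) = 0 := val_even h0
    rcases n with _ | m
    · simp [hv]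
    · rw [PowerSeries.coeff_succ_X_mul, coeff_sq, PowerSeries.coeff_mk]
      have hm : ¬ (2 ∣ m) := by omega
      rw [if_neg hm, hv]
      norm_num
  · have h1 : n % 2 = 1 := Nat.odd_iff.mp ho
    obtain ⟨k, rfl⟩ : ∃ k, n = 2 * k + 1 := ⟨n / 2, by omega⟩
    have hv : padicValNat 2 (2 * k + 1 + 1) = padicValNat 2 (k + 1) + 1 := by
      have := val_odd (n := 2 * k + 1) (by omega)
      simpa [show (2 * k + 1 - 1) / 2 = k by omega] using this
    rw [show 2 * k + 1 = (2 * k) + 1 from rfl, PowerSeries.coeff_succ_X_mul, coeff_sq,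
      if_pos (by omega : 2 ∣ 2 * k), show 2 * k / 2 = k from by omega]
    simp only [PowerSeries.coeff_mk]
    rw [hv]
    set w := padicValNat 2 (k + 1) with hwdef
    split_ifs <;> first | (exfalso; omega) | decide

private lemma coeffH4 (H : PowerSeries (ZMod 2)) (n : ℕ) :
    PowerSeries.coeff n (H ^ 4) =
      if 4 ∣ n then PowerSeries.coeff (n / 4) H else 0 := by
  have h : H ^ 4 = (H ^ 2) ^ 2 := by ring
  rw [h, coeff_sq]
  by_cases h2 : 2 ∣ n
  · rw [if_pos h2, coeff_sq]
    by_cases h4 : 4 ∣ n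
    · rw [if_pos (by omega : 2 ∣ n / 2), if_pos h4, show n / 2 / 2 = n / 4 from by omega]
    · rw [if_neg (by omega : ¬ 2 ∣ n / 2), if_neg h4]
  · rw [if_neg h2, if_neg (by omega : ¬ 4 ∣ n)]

private lemma ones_eq (F₀ H : PowerSeries (ZMod 2))
    (hF₀ : F₀ = PowerSeries.mk fun m =>
      if padicValNat 2 (m + 1) % 4 = 0 then 1 else 0)
    (hH : H = F₀ + PowerSeries.X * F₀ ^ 2) :
    H + PowerSeries.X ^ 3 * H ^ 4 = PowerSeries.mk (fun _ => (1 : ZMod 2)) := by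
  ext n
  rw [map_add, PowerSeries.coeff_X_pow_mul', coeffH4]
  simp only [coeffH F₀ H hF₀ hH, PowerSeries.coeff_mk]
  rcases (show n % 2 = 0 ∨ n % 4 = 1 ∨ n % 4 = 3 by omega) with h | h | h
  · rw [val_even h]
    split_ifs <;> first | (exfalso; omega) | decide
  · obtain ⟨m, rfl⟩ : ∃ m, n = 4 * m + 1 := ⟨n / 4, by omega⟩
    have hv : padicValNat 2 (4 * m + 1 + 1) = 1 := by
      have h1 := val_odd (n := 4 * m + 1) (by omega)
      have h2 := val_even (n := 2 * m) (by omega)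
      simp only [show (4 * m + 1 - 1) / 2 = 2 * m from by omega] at h1
      omega
    rw [hv]
    split_ifs <;> first | (exfalso; omega) | decide
  · obtain ⟨m, rfl⟩ : ∃ m, n = 4 * m + 3 := ⟨n / 4, by omega⟩
    have hv : padicValNat 2 (4 * m + 3 + 1) = padicValNat 2 (m + 1) + 2 := by
      have h1 := val_odd (n := 4 * m + 3) (by omega)
      have h2 := val_odd (n := 2 * m + 1) (by omega)
      simp only [show (4 * m + 3 - 1) / 2 = 2 * m + 1 from by omega,
        show (2 * m + 1 - 1) / 2 = m from by omega] at h1 h2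
      omega
    rw [show (4 * m + 3 - 3) / 4 = m from by omega, hv]
    set w := padicValNat 2 (m + 1) with hwdef
    split_ifs <;> first | (exfalso; omega) | decide

private lemma part1 (F₀ H : PowerSeries (ZMod 2))
    (hF₀ : F₀ = PowerSeries.mk fun m =>
      if padicValNat 2 (m + 1) % 4 = 0 then 1 else 0)
    (hH : H = F₀ + PowerSeries.X * F₀ ^ 2) :
    (1 + PowerSeries.X) * (H + PowerSeries.X ^ 3 * H ^ 4) = 1 := by
  rw [ones_eq F₀ H hF₀ hH, add_mul, one_mul]
  ext n
  rcases n with _ | m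
  · simp [PowerSeries.coeff_mk]
  · rw [map_add, PowerSeries.coeff_succ_X_mul]
    simp only [PowerSeries.coeff_mk, PowerSeries.coeff_one, Nat.succ_ne_zero, if_false]
    decide



/-- The field `F₂(a,b)` of rational functions in two indeterminates over `F₂`. -/
abbrev F2ab' : Type := FractionRing (MvPolynomial (Fin 2) (ZMod 2))

open scoped RatFunc

set_option maxHeartbeats 2000000 in
set_option synthInstance.maxHeartbeats 400000 in
open Polynomial IntermediateField in
/-- Let `F₀ ∈ F₂[[z]]` be supported on `{m : ν₂(m+1) ≡ 0 (mod 4)}`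
and `H = F₀ + z F₀²`.  Then `(1+z)(H + z³H⁴) = 1`; in particular the power
series `F = Σ s_m z^m` attached to the sequence `s((aabb)^∞)` (so `s_m = a` if
`ν₂(m+1) mod 4 ∈ {0,1}` and `s_m = b` otherwise), with `a, b` the two
indeterminates of `F₂(a,b)`, is algebraic of degree 4 — and not 8 — over
`F₂(a,b)(z)`. -/
theorem stmt19 (F₀ H : PowerSeries (ZMod 2))
    (hF₀ : F₀ = PowerSeries.mk fun m =>
      if padicValNat 2 (m + 1) % 4 = 0 then 1 else 0)
    (hH : H = F₀ + PowerSeries.X * F₀ ^ 2) :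
    (1 + PowerSeries.X) * (H + PowerSeries.X ^ 3 * H ^ 4) = 1 ∧
      ∀ a b : F2ab',
        a = algebraMap (MvPolynomial (Fin 2) (ZMod 2)) F2ab' (MvPolynomial.X 0) →
        b = algebraMap (MvPolynomial (Fin 2) (ZMod 2)) F2ab' (MvPolynomial.X 1) →
        ∀ F : PowerSeries F2ab',
          F = (PowerSeries.mk fun m =>
            if padicValNat 2 (m + 1) % 4 < 2 then a else b) →
          ∃ P : Polynomial (RatFunc F2ab'), P ≠ 0 ∧ P.natDegree = 4 ∧
            Polynomial.aeval (F : LaurentSeries F2ab') P = 0 ∧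
            ∀ Q : Polynomial (RatFunc F2ab'), Q ≠ 0 →
              Polynomial.aeval (F : LaurentSeries F2ab') Q = 0 → 4 ≤ Q.natDegree := by
  refine ⟨part1 F₀ H hF₀ hH, ?_⟩
  intro a b ha hb F hF
  classical
  set φ : ZMod 2 →+* F2ab' :=
    (algebraMap (MvPolynomial (Fin 2) (ZMod 2)) F2ab').comp (MvPolynomial.C) with hφ
  haveI hK2 : CharP F2ab' 2 := charP_of_injective_ringHom φ.injective 2
  haveI hL2 : CharP (LaurentSeries F2ab') 2 :=
    charP_of_injective_ringHom (algebraMap F2ab' (LaurentSeries F2ab')).injective 2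
  -- the image of H over K
  set H' : PowerSeries F2ab' := PowerSeries.map φ H with hH'
  have hid : (1 + PowerSeries.X) * (H' + PowerSeries.X ^ 3 * H' ^ 4) = 1 := by
    have h1 := congrArg (PowerSeries.map φ) (part1 F₀ H hF₀ hH)
    simpa only [map_mul, map_add, map_pow, map_one, PowerSeries.map_X] using h1
  have hcoeffH' : ∀ n, PowerSeries.coeff n H' =
      if padicValNat 2 (n + 1) % 4 < 2 then 1 else 0 := by
    intro n
    rw [hH', PowerSeries.coeff_map, coeffH F₀ H hF₀ hH]
    split_ifs <;> simp
  set onesK : PowerSeries F2ab' := PowerSeries.mk (fun _ => 1) with honesK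
  have honesid : (1 + PowerSeries.X) * onesK = 1 := by
    have h0 : (1 + PowerSeries.X) * (PowerSeries.mk fun _ => (1 : ZMod 2)) = 1 := by
      rw [← ones_eq F₀ H hF₀ hH]; exact part1 F₀ H hF₀ hH
    have h1 := congrArg (PowerSeries.map φ) h0
    simp only [map_mul, map_add, map_one, PowerSeries.map_X] at h1
    have h2 : PowerSeries.map φ (PowerSeries.mk fun _ => (1 : ZMod 2)) = onesK := by
      ext n
      simp [honesK, PowerSeries.coeff_map]
    rwa [h2] at h1
  have hb2 : b + b = 0 := by
    have := CharTwo.add_self_eq_zero (R := F2ab') b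
    exact this
  have hF_eq : F = PowerSeries.C (a + b) * H' + PowerSeries.C b * onesK := by
    rw [hF]
    ext n
    rw [map_add, PowerSeries.coeff_C_mul, PowerSeries.coeff_C_mul, hcoeffH', honesK,
      PowerSeries.coeff_mk, PowerSeries.coeff_mk]
    split_ifs
    · rw [mul_one, mul_one, add_assoc, hb2, add_zero]
    · rw [mul_zero, mul_one, zero_add]
  -- move to Laurent series
  set z : LaurentSeries F2ab' := HahnSeries.single 1 1 with hzdef
  set h : LaurentSeries F2ab' := (H' : LaurentSeries F2ab') with hhdef
  set e : LaurentSeries F2ab' := (onesK : LaurentSeries F2ab') with hedef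
  have hidL : (1 + z) * (h + z ^ 3 * h ^ 4) = 1 := by
    have h1 := congrArg (fun S : PowerSeries F2ab' => (S : LaurentSeries F2ab')) hid
    simpa only [PowerSeries.coe_mul, PowerSeries.coe_add, PowerSeries.coe_pow,
      PowerSeries.coe_one, PowerSeries.coe_X] using h1
  have honesL : (1 + z) * e = 1 := by
    have h1 := congrArg (fun S : PowerSeries F2ab' => (S : LaurentSeries F2ab')) honesid
    simpa only [PowerSeries.coe_mul, PowerSeries.coe_add, PowerSeries.coe_pow,
      PowerSeries.coe_one, PowerSeries.coe_X] using h1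
  have hfL : (F : LaurentSeries F2ab') = HahnSeries.C (a + b) * h + HahnSeries.C b * e := by
    have h1 := congrArg (fun S : PowerSeries F2ab' => (S : LaurentSeries F2ab')) hF_eq
    simpa only [PowerSeries.coe_mul, PowerSeries.coe_add, PowerSeries.coe_C] using h1
  -- basic algebraMap facts
  have hzalg : algebraMap (RatFunc F2ab') (LaurentSeries F2ab') RatFunc.X = z :=
    RatFunc.coe_X
  have hCalg : ∀ r : F2ab',
      algebraMap (RatFunc F2ab') (LaurentSeries F2ab') (RatFunc.C r) = HahnSeries.C r :=
    fun r => by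
      rw [← RatFunc.algebraMap_C, ← IsScalarTower.algebraMap_apply]
      simp
  -- h is nonzero
  have hH'ne : H' ≠ 0 := by
    intro h0
    have h1 := hcoeffH' 0
    rw [h0, map_zero] at h1
    rw [show padicValNat 2 (0 + 1) = 0 from padicValNat.one] at h1
    norm_num at h1
  have hne : h ≠ 0 := by
    intro h0
    have h2 : (HahnSeries.ofPowerSeries ℤ F2ab') H' = (HahnSeries.ofPowerSeries ℤ F2ab') 0 := by
      rw [map_zero]; exact h0
    exact hH'ne (HahnSeries.ofPowerSeries_injective h2)
  set w : LaurentSeries F2ab' := h⁻¹ with hwdef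
  -- the Eisenstein polynomial
  set S₀ : Polynomial (Polynomial F2ab') :=
    Polynomial.X ^ 4 + Polynomial.C (1 + Polynomial.X) * Polynomial.X ^ 3 +
      Polynomial.C (Polynomial.X ^ 3 * (1 + Polynomial.X)) with hS₀
  have hS₀monic : S₀.Monic := by
    rw [hS₀]; monicity!
  have hS₀deg : S₀.natDegree = 4 := by rw [hS₀]; compute_degree!
  have hXne : (1 + Polynomial.X : Polynomial F2ab') ≠ 0 := by
    intro hc
    have h1 := congrArg (fun p : Polynomial F2ab' => p.coeff 0) hc
    simp at h1
  have hprime : Prime (1 + Polynomial.X : Polynomial F2ab') := by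
    have hdeg : (1 + Polynomial.X : Polynomial F2ab').degree = 1 := by
      rw [show (1 + Polynomial.X : Polynomial F2ab') = Polynomial.X + Polynomial.C 1 by
        rw [Polynomial.C_1, add_comm]]
      exact Polynomial.degree_X_add_C 1
    exact UniqueFactorizationMonoid.irreducible_iff_prime.mp
      (Polynomial.irreducible_of_degree_eq_one hdeg)
  have hPprime : (Ideal.span {(1 + Polynomial.X : Polynomial F2ab')}).IsPrime :=
    (Ideal.span_singleton_prime hXne).mpr hprime
  have hc0 : S₀.coeff 0 = Polynomial.X ^ 3 * (1 + Polynomial.X) := by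
    rw [hS₀]
    simp only [Polynomial.coeff_add, Polynomial.coeff_C_mul, Polynomial.coeff_X_pow,
      Polynomial.coeff_C]
    norm_num
  have hc1 : S₀.coeff 1 = 0 := by
    rw [hS₀]
    simp only [Polynomial.coeff_add, Polynomial.coeff_C_mul, Polynomial.coeff_X_pow,
      Polynomial.coeff_C]
    norm_num
  have hc2 : S₀.coeff 2 = 0 := by
    rw [hS₀]
    simp only [Polynomial.coeff_add, Polynomial.coeff_C_mul, Polynomial.coeff_X_pow,
      Polynomial.coeff_C]
    norm_num
  have hc3 : S₀.coeff 3 = 1 + Polynomial.X := by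
    rw [hS₀]
    simp only [Polynomial.coeff_add, Polynomial.coeff_C_mul, Polynomial.coeff_X_pow,
      Polynomial.coeff_C]
    norm_num
  have hEis : S₀.IsEisensteinAt (Ideal.span {(1 + Polynomial.X : Polynomial F2ab')}) := by
    refine ⟨?_, ?_, ?_⟩
    · rw [hS₀monic.leadingCoeff]
      intro h1
      exact hPprime.ne_top ((Ideal.eq_top_iff_one _).mpr h1)
    · intro n hn
      rw [hS₀deg] at hn
      interval_cases n
      · rw [hc0]; exact Ideal.mem_span_singleton.mpr ⟨Polynomial.X ^ 3, by ring⟩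
      · rw [hc1]; exact zero_mem _
      · rw [hc2]; exact zero_mem _
      · rw [hc3]; exact Ideal.mem_span_singleton_self _
    · rw [hc0]
      intro hcon
      rw [Ideal.span_singleton_pow, Ideal.mem_span_singleton] at hcon
      have hc' : (1 + Polynomial.X) * (1 + Polynomial.X) ∣
          (1 + Polynomial.X) * (Polynomial.X : Polynomial F2ab') ^ 3 := by
        rw [← sq, mul_comm ((1 : Polynomial F2ab') + Polynomial.X) (Polynomial.X ^ 3)]
        exact hcon
      obtain ⟨q, hq⟩ := (mul_dvd_mul_iff_left hXne).mp hc'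
      have h1 := congrArg (Polynomial.eval 1) hq
      have h2 : ((1 : F2ab') + 1) = 0 := CharTwo.add_self_eq_zero 1
      rw [Polynomial.eval_mul, Polynomial.eval_add, Polynomial.eval_one, Polynomial.eval_X,
        Polynomial.eval_pow, Polynomial.eval_X, one_pow, h2, zero_mul] at h1
      exact one_ne_zero h1
  have hS₀irr : Irreducible S₀ :=
    hEis.irreducible hPprime hS₀monic.isPrimitive (by rw [hS₀deg]; norm_num)
  set S : Polynomial (RatFunc F2ab') :=
    S₀.map (algebraMap (Polynomial F2ab') (RatFunc F2ab')) with hS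
  have hSmonic : S.Monic := hS₀monic.map _
  have hSdeg : S.natDegree = 4 := by rw [hS, hS₀monic.natDegree_map, hS₀deg]
  have hSirr : Irreducible S :=
    (Polynomial.Monic.irreducible_iff_irreducible_map_fraction_map
      (K := RatFunc F2ab') hS₀monic).mp hS₀irr
  -- w is a root of S
  have htwo : (2 : LaurentSeries F2ab') = 0 := CharTwo.two_eq_zero
  have hSaeval : Polynomial.aeval w S = 0 := by
    rw [hS, Polynomial.aeval_map_algebraMap, hS₀]
    simp only [map_add, map_mul, map_pow, Polynomial.aeval_X, Polynomial.aeval_C]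
    have halg : ∀ p : Polynomial F2ab',
        algebraMap (Polynomial F2ab') (LaurentSeries F2ab') p =
          algebraMap (RatFunc F2ab') (LaurentSeries F2ab')
            (algebraMap (Polynomial F2ab') (RatFunc F2ab') p) := fun p =>
      IsScalarTower.algebraMap_apply _ _ _ p
    rw [halg, halg]
    simp only [map_add, map_one, map_pow, map_mul, RatFunc.algebraMap_X, hzalg]
    -- goal : w ^ 4 + (1 + z) * w ^ 3 + z ^ 3 * (1 + z) = 0
    have hinv : h * w = 1 := mul_inv_cancel₀ hne
    apply mul_left_cancel₀ (pow_ne_zero 4 hne)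
    rw [mul_zero]
    have expand : h ^ 4 * (w ^ 4 + (1 + z) * w ^ 3 + z ^ 3 * (1 + z)) =
        (h * w) ^ 4 + (1 + z) * h * (h * w) ^ 3 + z ^ 3 * (1 + z) * h ^ 4 := by ring
    rw [expand, hinv]
    linear_combination hidL + htwo
  have hwint : IsIntegral (RatFunc F2ab') w :=
    ⟨S, hSmonic, by rwa [← Polynomial.aeval_def]⟩
  have hminw : minpoly (RatFunc F2ab') w = S :=
    (minpoly.eq_of_irreducible_of_monic hSirr hSaeval hSmonic).symm
  -- membership facts
  have heM : ∀ M : IntermediateField (RatFunc F2ab') (LaurentSeries F2ab'), e ∈ M := by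
    intro M
    have h1z : (1 + z) ∈ M := by
      have h1 : algebraMap (RatFunc F2ab') (LaurentSeries F2ab') (1 + RatFunc.X) = 1 + z := by
        rw [map_add, map_one, hzalg]
      rw [← h1]; exact M.algebraMap_mem _
    have h2 : e = (1 + z)⁻¹ := eq_inv_of_mul_eq_one_right honesL
    rw [h2]; exact M.inv_mem h1z
  have hCM : ∀ (M : IntermediateField (RatFunc F2ab') (LaurentSeries F2ab')) (r : F2ab'),
      HahnSeries.C r ∈ M := by
    intro M r
    rw [← hCalg r]; exact M.algebraMap_mem _
  have habne : (a + b) ≠ 0 := by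
    intro hc
    have hbb := CharTwo.add_self_eq_zero (R := F2ab') b
    have hab' : a = b := by linear_combination hc - hbb
    rw [ha, hb] at hab'
    exact (MvPolynomial.X_injective.ne (show (0 : Fin 2) ≠ 1 by decide))
      (IsFractionRing.injective (MvPolynomial (Fin 2) (ZMod 2)) F2ab' hab')
  have hfw : (HahnSeries.ofPowerSeries ℤ F2ab') F =
      HahnSeries.C (a + b) * w⁻¹ + HahnSeries.C b * e := by
    rw [hfL, hwdef, inv_inv]
  have hfmem : (HahnSeries.ofPowerSeries ℤ F2ab') F ∈ (RatFunc F2ab')⟮w⟯ := by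
    rw [hfw]
    exact add_mem (mul_mem (hCM _ _) (inv_mem (mem_adjoin_simple_self _ _)))
      (mul_mem (hCM _ _) (heM _))
  have hwmem : w ∈ (RatFunc F2ab')⟮(HahnSeries.ofPowerSeries ℤ F2ab') F⟯ := by
    have hkey : HahnSeries.C ((a + b)⁻¹) *
        ((HahnSeries.ofPowerSeries ℤ F2ab') F + HahnSeries.C b * e) = w⁻¹ := by
      rw [hfw, add_assoc, CharTwo.add_self_eq_zero (HahnSeries.C b * e), add_zero,
        ← mul_assoc, ← map_mul, inv_mul_cancel₀ habne, map_one, one_mul]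
    have hw' : w = (HahnSeries.C ((a + b)⁻¹) *
        ((HahnSeries.ofPowerSeries ℤ F2ab') F + HahnSeries.C b * e))⁻¹ := by
      rw [hkey, inv_inv]
    rw [hw']
    exact inv_mem (mul_mem (hCM _ _)
      (add_mem (mem_adjoin_simple_self _ _) (mul_mem (hCM _ _) (heM _))))
  have hadj : (RatFunc F2ab')⟮(HahnSeries.ofPowerSeries ℤ F2ab') F⟯ = (RatFunc F2ab')⟮w⟯ :=
    le_antisymm (adjoin_simple_le_iff.mpr hfmem) (adjoin_simple_le_iff.mpr hwmem)
  haveI hfd : FiniteDimensional (RatFunc F2ab') ((RatFunc F2ab')⟮w⟯) :=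
    IntermediateField.adjoin.finiteDimensional hwint
  have hfint : IsIntegral (RatFunc F2ab') ((HahnSeries.ofPowerSeries ℤ F2ab') F) := by
    have h1 : IsIntegral (RatFunc F2ab')
        (⟨(HahnSeries.ofPowerSeries ℤ F2ab') F, hfmem⟩ : (RatFunc F2ab')⟮w⟯) :=
      IsIntegral.of_finite _ _
    exact h1.map ((RatFunc F2ab')⟮w⟯.val)
  have hd1 : (minpoly (RatFunc F2ab') ((HahnSeries.ofPowerSeries ℤ F2ab') F)).natDegree = 4 := by
    rw [← IntermediateField.adjoin.finrank hfint, hadj,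
      IntermediateField.adjoin.finrank hwint, hminw, hSdeg]
  refine ⟨minpoly (RatFunc F2ab') ((HahnSeries.ofPowerSeries ℤ F2ab') F),
    minpoly.ne_zero hfint, hd1, minpoly.aeval _ _, ?_⟩
  intro Q hQ hQ0
  have hle := minpoly.degree_le_of_ne_zero (RatFunc F2ab') _ hQ hQ0
  have hle' := Polynomial.natDegree_le_natDegree hle
  rwa [hd1] at hle'
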